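/- Let n ≥ 1 and let G be a positive definite Hermitian n×n complex matrix. For all positive definite Hermitian n×n complex matrices A and B, one has Φ_G(A) − Φ_G(B) ≤ Re tr(B⁻¹ G B⁻¹ (A − B)) / Re tr(B⁻¹ G), where Φ_G(A) := −log(Re tr(A⁻¹ G)). -/

import Mathlib

open Matrix
open scoped ComplexOrder
open scoped MatrixOrder

noncomputable def mvec {n : ℕ} (X : Matrix (Fin n) (Fin n) ℂ) :
    EuclideanSpace ℂ (Fin n × Fin n) := WithLp.toLp 2 (fun p => X p.1 p.2)

lemma trace_eq_inner {n : ℕ} (X Y : Matrix (Fin n) (Fin n) ℂ) :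
    (X * Yᴴ).trace = inner ℂ (mvec Y) (mvec X) := by
  simp only [trace, diag, mul_apply, conjTranspose_apply, PiLp.inner_apply,
    RCLike.inner_apply, mvec, PiLp.toLp_apply]
  rw [← Finset.sum_product']
  exact Finset.sum_congr rfl fun p _ => rfl

lemma cs_trace {n : ℕ} (X Y : Matrix (Fin n) (Fin n) ℂ) :
    ((X * Yᴴ).trace.re) ^ 2 ≤ (X * Xᴴ).trace.re * (Y * Yᴴ).trace.re := by
  have h := inner_mul_inner_self_le (𝕜 := ℂ) (mvec X) (mvec Y)
  rw [norm_inner_symm] at h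
  have h1 : |(X * Yᴴ).trace.re| ≤ ‖(X * Yᴴ).trace‖ := Complex.abs_re_le_norm _
  calc ((X * Yᴴ).trace.re) ^ 2 = |(X * Yᴴ).trace.re| ^ 2 := (sq_abs _).symm
    _ ≤ ‖(X * Yᴴ).trace‖ ^ 2 := pow_le_pow_left₀ (abs_nonneg _) h1 2
    _ = ‖(inner ℂ (mvec Y) (mvec X) : ℂ)‖ * ‖(inner ℂ (mvec Y) (mvec X) : ℂ)‖ := by
        rw [trace_eq_inner, sq]
    _ ≤ _ := by
        rw [trace_eq_inner X X, trace_eq_inner Y Y]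
        exact h

lemma trace_re_pos {n : ℕ} (hn : 1 ≤ n) (X : Matrix (Fin n) (Fin n) ℂ)
    (hX : IsUnit X) : 0 < (X * Xᴴ).trace.re := by
  have hx : mvec X ≠ 0 := by
    intro h0
    have hX0 : X = 0 := by
      ext i j
      simpa [mvec] using congrArg (fun v => v (i, j)) h0
    have : Nonempty (Fin n) := ⟨⟨0, hn⟩⟩
    exact hX.ne_zero (by simpa using hX0)
  have hpos : (0:ℝ) < ‖mvec X‖ := norm_pos_iff.mpr hx
  have h2 : RCLike.re (inner (𝕜 := ℂ) (mvec X) (mvec X)) = ‖mvec X‖ ^ 2 :=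
    inner_self_eq_norm_sq _
  rw [trace_eq_inner]
  calc (0:ℝ) < ‖mvec X‖ ^ 2 := pow_pos hpos 2
    _ = _ := h2.symm

lemma sqrt_isUnit {n : ℕ} {A : Matrix (Fin n) (Fin n) ℂ} (hA : A.PosDef) :
    IsUnit (CFC.sqrt A) := by
  have h := CFC.sqrt_mul_sqrt_self A hA.posSemidef.nonneg
  have hd : det (CFC.sqrt A) * det (CFC.sqrt A) = det A := by
    rw [← det_mul, h]
  have hdet : det A ≠ 0 := hA.det_pos.ne'
  refine (Matrix.isUnit_iff_isUnit_det _).2 (isUnit_iff_ne_zero.2 ?_)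
  intro h0; rw [h0, zero_mul] at hd; exact hdet hd.symm

/-- `Φ_G(A) = -log(Re tr(A⁻¹ G))`. -/
noncomputable def PhiG {n : ℕ} (G A : Matrix (Fin n) (Fin n) ℂ) : ℝ :=
  -Real.log ((A⁻¹ * G).trace.re)

/-- The first-order (tangent-plane) inequality (3.11) of the paper: the
concave function `Φ_G` lies below its linearization. -/
theorem stmt_2 (n : ℕ) (hn : 1 ≤ n) (G A B : Matrix (Fin n) (Fin n) ℂ)
    (hG : G.PosDef) (hA : A.PosDef) (hB : B.PosDef) :
    PhiG G A - PhiG G B ≤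
      (B⁻¹ * G * B⁻¹ * (A - B)).trace.re / (B⁻¹ * G).trace.re := by
  classical
  set Gs := CFC.sqrt G with hGsdef
  set S := CFC.sqrt A with hSdef
  set U := CFC.sqrt B with hUdef
  have hGG : Gs * Gs = G := CFC.sqrt_mul_sqrt_self G hG.posSemidef.nonneg
  have hSS : S * S = A := CFC.sqrt_mul_sqrt_self A hA.posSemidef.nonneg
  have hUU : U * U = B := CFC.sqrt_mul_sqrt_self B hB.posSemidef.nonneg
  have hGsh : Gsᴴ = Gs := (CFC.sqrt_nonneg G).posSemidef.1
  have hSh : Sᴴ = S := (CFC.sqrt_nonneg A).posSemidef.1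
  have hUh : Uᴴ = U := (CFC.sqrt_nonneg B).posSemidef.1
  have hGsU : IsUnit Gs := sqrt_isUnit hG
  have hSU : IsUnit S := sqrt_isUnit hA
  have hUU' : IsUnit U := sqrt_isUnit hB
  have hSdetU : IsUnit S.det := (Matrix.isUnit_iff_isUnit_det _).1 hSU
  have hUdetU : IsUnit U.det := (Matrix.isUnit_iff_isUnit_det _).1 hUU'
  have hBdetU : IsUnit B.det := (Matrix.isUnit_iff_isUnit_det _).1 hB.isUnit
  have hS1 : S * S⁻¹ = 1 := Matrix.mul_nonsing_inv _ hSdetU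
  have hBinv : B⁻¹ * B = 1 := Matrix.nonsing_inv_mul _ hBdetU
  have hSinv : S⁻¹ * S⁻¹ = A⁻¹ := by rw [← hSS, Matrix.mul_inv_rev]
  have hUinv : U⁻¹ * U⁻¹ = B⁻¹ := by rw [← hUU, Matrix.mul_inv_rev]
  have hSinvh : (S⁻¹)ᴴ = S⁻¹ := by rw [conjTranspose_nonsing_inv, hSh]
  have hUinvh : (U⁻¹)ᴴ = U⁻¹ := by rw [conjTranspose_nonsing_inv, hUh]
  have hBinvh : (B⁻¹)ᴴ = B⁻¹ := by rw [conjTranspose_nonsing_inv, hB.isHermitian.eq]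
  set X := Gs * B⁻¹ * S with hX
  set Y := Gs * S⁻¹ with hY
  set W := Gs * U⁻¹ with hW
  -- X * Yᴴ
  have hXYe : X * Yᴴ = Gs * B⁻¹ * Gs := by
    rw [hX, hY, conjTranspose_mul, hSinvh, hGsh, Matrix.mul_assoc (Gs * B⁻¹) S _,
      ← Matrix.mul_assoc S S⁻¹ Gs, hS1, Matrix.one_mul]
  have hXYtr : (X * Yᴴ).trace = (B⁻¹ * G).trace := by
    rw [hXYe, Matrix.mul_assoc, Matrix.trace_mul_comm, Matrix.mul_assoc, hGG]
  -- Y * Yᴴ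
  have hYYe : Y * Yᴴ = Gs * A⁻¹ * Gs := by
    rw [hY, conjTranspose_mul, hSinvh, hGsh, Matrix.mul_assoc Gs S⁻¹ _,
      ← Matrix.mul_assoc S⁻¹ S⁻¹ Gs, hSinv, Matrix.mul_assoc]
  have hYYtr : (Y * Yᴴ).trace = (A⁻¹ * G).trace := by
    rw [hYYe, Matrix.mul_assoc, Matrix.trace_mul_comm, Matrix.mul_assoc, hGG]
  -- W * Wᴴ
  have hWWe : W * Wᴴ = Gs * B⁻¹ * Gs := by
    rw [hW, conjTranspose_mul, hUinvh, hGsh, Matrix.mul_assoc Gs U⁻¹ _,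
      ← Matrix.mul_assoc U⁻¹ U⁻¹ Gs, hUinv, Matrix.mul_assoc]
  have hWWtr : (W * Wᴴ).trace = (B⁻¹ * G).trace := by
    rw [hWWe, Matrix.mul_assoc, Matrix.trace_mul_comm, Matrix.mul_assoc, hGG]
  -- X * Xᴴ
  have hXXe : X * Xᴴ = Gs * B⁻¹ * A * B⁻¹ * Gs := by
    rw [hX, conjTranspose_mul, conjTranspose_mul, hSh, hBinvh, hGsh]
    rw [Matrix.mul_assoc (Gs * B⁻¹) S (S * (B⁻¹ * Gs)),
      ← Matrix.mul_assoc S S (B⁻¹ * Gs), hSS]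
    rw [← Matrix.mul_assoc (Gs * B⁻¹) A (B⁻¹ * Gs),
      ← Matrix.mul_assoc (Gs * B⁻¹ * A) B⁻¹ Gs]
  have hXXtr : (X * Xᴴ).trace = (B⁻¹ * G * B⁻¹ * A).trace := by
    rw [hXXe]
    calc (Gs * B⁻¹ * A * B⁻¹ * Gs).trace
        = (Gs * (B⁻¹ * A * B⁻¹ * Gs)).trace := by
          simp only [Matrix.mul_assoc]
      _ = (B⁻¹ * A * B⁻¹ * Gs * Gs).trace := by
          rw [Matrix.trace_mul_comm]
      _ = (B⁻¹ * A * (B⁻¹ * G)).trace := by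
          simp only [Matrix.mul_assoc, hGG]
      _ = (B⁻¹ * G * (B⁻¹ * A)).trace := Matrix.trace_mul_comm _ _
      _ = (B⁻¹ * G * B⁻¹ * A).trace := by simp only [Matrix.mul_assoc]
  -- real quantities
  set a := (A⁻¹ * G).trace.re with hadef
  set b := (B⁻¹ * G).trace.re with hbdef
  set c := (B⁻¹ * G * B⁻¹ * A).trace.re with hcdef
  have ha : 0 < a := by
    rw [hadef, ← hYYtr]
    exact trace_re_pos hn Y (hGsU.mul ((Matrix.isUnit_nonsing_inv_iff).2 hSU))
  have hb : 0 < b := by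
    rw [hbdef, ← hWWtr]
    exact trace_re_pos hn W (hGsU.mul ((Matrix.isUnit_nonsing_inv_iff).2 hUU'))
  have hcs : b ^ 2 ≤ c * a := by
    have := cs_trace X Y
    rw [hXYtr, hXXtr, hYYtr] at this
    exact this
  -- rewrite the RHS
  have hsplit : (B⁻¹ * G * B⁻¹ * (A - B)).trace.re = c - b := by
    have h1 : B⁻¹ * G * B⁻¹ * (A - B) = B⁻¹ * G * B⁻¹ * A - B⁻¹ * G := by
      rw [Matrix.mul_sub, Matrix.mul_assoc (B⁻¹ * G) B⁻¹ B, hBinv, Matrix.mul_one]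
    rw [h1, Matrix.trace_sub, Complex.sub_re]
  rw [hsplit]
  -- final real arithmetic
  have hPhi : PhiG G A - PhiG G B = Real.log b - Real.log a := by
    simp only [PhiG]; ring
  rw [hPhi]
  have h1 : Real.log b - Real.log a = Real.log (b / a) :=
    (Real.log_div hb.ne' ha.ne').symm
  have h2 : Real.log (b / a) ≤ b / a - 1 :=
    Real.log_le_sub_one_of_pos (div_pos hb ha)
  have h3 : b / a ≤ c / b := by
    rw [div_le_div_iff₀ ha hb]
    nlinarith [hcs]
  have h4 : (c - b) / b = c / b - 1 := by
    rw [sub_div, div_self hb.ne']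
  rw [h4]
  linarith [h1, h2, h3]
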